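/- There exists a post-Lie algebra structure on the pair (g, n), where g = sl_2(ℂ) ⊕ ℂ³ (the direct Lie algebra sum of sl_2(ℂ) and the 3-dimensional abelian Lie algebra) and n = ℂ⁴ ⊕ r_2(ℂ) (the direct Lie algebra sum of the 4-dimensional abelian Lie algebra and the 2-dimensional non-abelian Lie algebra), both regarded as Lie brackets on the same 7-dimensional complex vector space. In particular, there is a pair (g, n) with g reductive non-semisimple and n solvable non-nilpotent admitting a post-Lie algebra structure. -/
import Mathlib


noncomputable section

/-- A map `V → V → V` is ℂ-bilinear. -/
def IsBilin {V : Type*} [AddCommGroup V] [Module ℂ V] (f : V → V → V) : Prop :=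
  (∀ (a : ℂ) (x y z : V), f (a • x + y) z = a • f x z + f y z) ∧
  (∀ (a : ℂ) (x y z : V), f x (a • y + z) = a • f x y + f x z)

/-- `f` is a Lie bracket on the complex vector space `V`. -/
def IsLieBracket {V : Type*} [AddCommGroup V] [Module ℂ V] (f : V → V → V) : Prop :=
  IsBilin f ∧ (∀ x, f x x = 0) ∧
  ∀ x y z, f x (f y z) + f y (f z x) + f z (f x y) = 0

/-- `p` is a post-Lie algebra structure on the pair of Lie brackets `(g, n)` on `V`. -/
def IsPostLieStruct {V : Type*} [AddCommGroup V] [Module ℂ V]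
    (g n p : V → V → V) : Prop :=
  IsBilin p ∧
  (∀ x y, p x y - p y x = g x y - n x y) ∧
  (∀ x y z, p (g x y) z = p x (p y z) - p y (p x z)) ∧
  (∀ x y z, p x (n y z) = n (p x y) z + n y (p x z))

/-- The bracket of `g = sl₂(ℂ) ⊕ ℂ³` on `ℂ⁶`: coordinates `0, 1, 2` carry `sl₂(ℂ)`
in the standard basis `(e, f, h) = (E₁₂, E₂₁, E₁₁ - E₂₂)` with `[e,f] = h`,
`[h,e] = 2e`, `[h,f] = -2f`, and coordinates `3, 4, 5` carry the `3`-dimensional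
abelian Lie algebra. -/
def sl2C3Bracket (x y : Fin 6 → ℂ) : Fin 6 → ℂ :=
  ![2 * (x 2 * y 0 - y 2 * x 0), -2 * (x 2 * y 1 - y 2 * x 1),
    x 0 * y 1 - y 0 * x 1, 0, 0, 0]

/-- The bracket of `n = ℂ⁴ ⊕ r₂(ℂ)` on `ℂ⁶`: coordinates `0, 1, 2, 3` carry the
`4`-dimensional abelian Lie algebra, and coordinates `4, 5` carry the `2`-dimensional
non-abelian Lie algebra `r₂(ℂ)` with basis `(a, b)` and bracket `{a, b} = b`. -/
def c4R2Bracket (x y : Fin 6 → ℂ) : Fin 6 → ℂ :=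
  ![0, 0, 0, 0, 0, x 4 * y 5 - y 4 * x 5]


/-- The post-Lie product: on coordinates `0..3` it is left multiplication in the
associative algebra `gl₂(ℂ)` (with `e₃` the identity matrix), and `e₄` acts on `e₅`
by `-1`. -/
def pAux (x y : Fin 6 → ℂ) : Fin 6 → ℂ :=
  ![x 2 * y 0 - x 0 * y 2 + x 0 * y 3 + x 3 * y 0,
    -(x 2 * y 1) + x 1 * y 2 + x 1 * y 3 + x 3 * y 1,
    (x 0 * y 1 - x 1 * y 0) / 2 + x 2 * y 3 + x 3 * y 2,
    (x 0 * y 1 + x 1 * y 0) / 2 + x 2 * y 2 + x 3 * y 3,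
    0, -(x 4 * y 5)]

lemma v6_0 (a b c d e f : ℂ) : (![a,b,c,d,e,f] : Fin 6 → ℂ) 0 = a := rfl
lemma v6_1 (a b c d e f : ℂ) : (![a,b,c,d,e,f] : Fin 6 → ℂ) 1 = b := rfl
lemma v6_2 (a b c d e f : ℂ) : (![a,b,c,d,e,f] : Fin 6 → ℂ) 2 = c := rfl
lemma v6_3 (a b c d e f : ℂ) : (![a,b,c,d,e,f] : Fin 6 → ℂ) 3 = d := rfl
lemma v6_4 (a b c d e f : ℂ) : (![a,b,c,d,e,f] : Fin 6 → ℂ) 4 = e := rfl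
lemma v6_5 (a b c d e f : ℂ) : (![a,b,c,d,e,f] : Fin 6 → ℂ) 5 = f := rfl

lemma funext6 {f g : Fin 6 → ℂ} (h0 : f 0 = g 0) (h1 : f 1 = g 1) (h2 : f 2 = g 2)
    (h3 : f 3 = g 3) (h4 : f 4 = g 4) (h5 : f 5 = g 5) : f = g := by
  funext i; fin_cases i; exacts [h0, h1, h2, h3, h4, h5]

/-- There exists a post-Lie algebra structure on the pair `(g, n)`
with `g = sl₂(ℂ) ⊕ ℂ³` and `n = ℂ⁴ ⊕ r₂(ℂ)`, both regarded as Lie brackets on the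
same (`6`-dimensional) complex vector space; in particular `g` is reductive
non-semisimple and `n` is solvable non-nilpotent. -/
theorem postLie_exists_on_sl2c3_c4r2 :
    IsLieBracket sl2C3Bracket ∧ IsLieBracket c4R2Bracket ∧
    ∃ p : (Fin 6 → ℂ) → (Fin 6 → ℂ) → (Fin 6 → ℂ),
      IsPostLieStruct sl2C3Bracket c4R2Bracket p := by
  refine ⟨⟨⟨?_, ?_⟩, ?_, ?_⟩, ⟨⟨?_, ?_⟩, ?_, ?_⟩, pAux, ⟨?_, ?_⟩, ?_, ?_, ?_⟩ <;>
    intros <;> apply funext6 <;>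
    · simp only [sl2C3Bracket, c4R2Bracket, pAux, v6_0, v6_1, v6_2, v6_3, v6_4, v6_5,
        Pi.add_apply, Pi.sub_apply, Pi.smul_apply, Pi.zero_apply, smul_eq_mul]
      try ring
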